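/- Let n ≥ 2, i : Fin n, and ε : Fin n → Bool with ε i = false (negative auto-regulation). Define f* : (Fin n → Bool) → Bool by f* s = true iff s i = false and there exists k ≠ i with s k = ε k. Then the number of decreasing transitions of f* at i equals 2^(n−1) and the number of increasing transitions of f* at i equals 2^(n−1) − 1 (so the total number of transitions of f* at i is 2^n − 1). Moreover, for every f : (Fin n → Bool) → Bool consistent with ε such that f s = true implies f* s = true for all s, the number of decreasing transitions of f at i equals 2^(n−1) and the number of increasing transitions of f at i is at most 2^(n−1) − 1. -/
import Mathlib


/-- `f` does not depend on coordinate `i`. -/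
def IndepOf {n : ℕ} (f : (Fin n → Bool) → Bool) (i : Fin n) : Prop :=
  ∀ (s : Fin n → Bool) (b : Bool), f (Function.update s i b) = f s

/-- Coordinate `i` is essential for `f`. -/
def EssentialCoord {n : ℕ} (f : (Fin n → Bool) → Bool) (i : Fin n) : Prop :=
  ∃ s : Fin n → Bool, f (Function.update s i false) ≠ f (Function.update s i true)

/-- `f` is positive in coordinate `i`. -/
def PosIn {n : ℕ} (f : (Fin n → Bool) → Bool) (i : Fin n) : Prop :=
  ∀ s : Fin n → Bool,
    f (Function.update s i false) = true → f (Function.update s i true) = true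

/-- `f` is negative in coordinate `i`. -/
def NegIn {n : ℕ} (f : (Fin n → Bool) → Bool) (i : Fin n) : Prop :=
  ∀ s : Fin n → Bool,
    f (Function.update s i true) = true → f (Function.update s i false) = true

/-- `f` is consistent with the sign vector `ε`: it is nondegenerate and each
coordinate acts with its prescribed sign. -/
def ConsistentWith {n : ℕ} (ε : Fin n → Bool) (f : (Fin n → Bool) → Bool) : Prop :=
  (∀ i : Fin n, EssentialCoord f i) ∧
  ∀ i : Fin n, (ε i = true → PosIn f i) ∧ (ε i = false → NegIn f i)

/-- Number of transitions of `f` at coordinate `i`: states where `f s ≠ s i`. -/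
noncomputable def numTrans {n : ℕ} (f : (Fin n → Bool) → Bool) (i : Fin n) : ℕ :=
  Nat.card {s : Fin n → Bool // f s ≠ s i}

/-- Number of increasing transitions of `f` at coordinate `i`. -/
noncomputable def numInc {n : ℕ} (f : (Fin n → Bool) → Bool) (i : Fin n) : ℕ :=
  Nat.card {s : Fin n → Bool // s i = false ∧ f s = true}

/-- Number of decreasing transitions of `f` at coordinate `i`. -/
noncomputable def numDec {n : ℕ} (f : (Fin n → Bool) → Bool) (i : Fin n) : ℕ :=
  Nat.card {s : Fin n → Bool // s i = true ∧ f s = false}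

/-- The maximally functional negative auto-regulation function `f*`. -/
def fstarNeg {n : ℕ} (ε : Fin n → Bool) (i : Fin n) : (Fin n → Bool) → Bool :=
  fun s => decide (s i = false ∧ ∃ k : Fin n, k ≠ i ∧ s k = ε k)

lemma natCard_filter' {n : ℕ} (p : (Fin n → Bool) → Prop) [DecidablePred p] :
    Nat.card {s // p s} = (Finset.univ.filter p).card := by
  rw [Nat.card_eq_fintype_card, Fintype.card_subtype]

lemma natCard_half' {n : ℕ} (i : Fin n) (b : Bool) :
    Nat.card {s : Fin n → Bool // s i = b} = 2 ^ (n - 1) := by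
  rw [Nat.card_eq_fintype_card]
  have e : {s : Fin n → Bool // s i = b} ≃ ({j : Fin n // j ≠ i} → Bool) :=
  { toFun := fun s j => s.1 j.1
    invFun := fun g => ⟨fun j => if h : j = i then b else g ⟨j, h⟩, by simp⟩
    left_inv := fun s => by
      apply Subtype.ext
      funext j
      by_cases h : j = i
      · subst h; simpa using s.2.symm
      · simp [h]
    right_inv := fun g => by
      funext j
      simp [j.prop] }
  rw [Fintype.card_congr e, Fintype.card_fun]
  simp [Fintype.card_subtype_compl]

lemma filter_half' {n : ℕ} (i : Fin n) (b : Bool) :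
    (Finset.univ.filter (fun s : Fin n → Bool => s i = b)).card = 2 ^ (n - 1) := by
  rw [← natCard_filter']
  exact natCard_half' i b

theorem fstar_negative_autoregulation (n : ℕ) (hn : 2 ≤ n) (i : Fin n)
    (ε : Fin n → Bool) (hi : ε i = false) :
    numDec (fstarNeg ε i) i = 2 ^ (n - 1) ∧
    numInc (fstarNeg ε i) i = 2 ^ (n - 1) - 1 ∧
    numTrans (fstarNeg ε i) i = 2 ^ n - 1 ∧
    ∀ f : (Fin n → Bool) → Bool, ConsistentWith ε f →
      (∀ s : Fin n → Bool, f s = true → fstarNeg ε i s = true) →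
      numDec f i = 2 ^ (n - 1) ∧ numInc f i ≤ 2 ^ (n - 1) - 1 := by
  classical
  set s0 : Fin n → Bool := fun k => if k = i then false else !ε k with hs0
  -- f* vanishes when s i = true
  have h1 : ∀ s : Fin n → Bool, s i = true → fstarNeg ε i s = false := by
    intro s hs
    simp [fstarNeg, hs]
  -- on s i = false, f* s = true ↔ s ≠ s0
  have h2 : ∀ s : Fin n → Bool, s i = false → (fstarNeg ε i s = true ↔ s ≠ s0) := by
    intro s hs
    constructor
    · intro ht heq
      subst heq
      rw [fstarNeg, decide_eq_true_iff] at ht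
      obtain ⟨-, k, hk, hk2⟩ := ht
      simp only [hs0, if_neg hk] at hk2
      simp at hk2
    · intro hne
      obtain ⟨j, hj⟩ := Function.ne_iff.mp hne
      have hji : j ≠ i := by
        intro h; subst h
        exact hj (by simp [hs0, hs])
      simp only [hs0, if_neg hji] at hj
      have hjε : s j = ε j := by
        cases hεj : ε j <;> cases hsj : s j <;> simp_all
      rw [fstarNeg, decide_eq_true_iff]
      exact ⟨hs, j, hji, hjε⟩
  have hs0i : s0 i = false := by simp [hs0]
  -- decreasing of f*
  have hdec : numDec (fstarNeg ε i) i = 2 ^ (n - 1) := by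
    rw [numDec]
    have : ∀ s : Fin n → Bool, (s i = true ∧ fstarNeg ε i s = false) ↔ s i = true := by
      intro s
      exact ⟨fun h => h.1, fun h => ⟨h, h1 s h⟩⟩
    rw [Nat.card_congr (Equiv.subtypeEquivRight this)]
    exact natCard_half' i true
  -- increasing of f*
  have hincset : (Finset.univ.filter (fun s : Fin n → Bool => s i = false ∧ fstarNeg ε i s = true))
      = (Finset.univ.filter (fun s : Fin n → Bool => s i = false)).erase s0 := by
    ext s
    simp only [Finset.mem_filter, Finset.mem_erase, Finset.mem_univ, true_and]
    constructor
    · rintro ⟨hf, ht⟩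
      exact ⟨(h2 s hf).mp ht, hf⟩
    · rintro ⟨hne, hf⟩
      exact ⟨hf, (h2 s hf).mpr hne⟩
  have hs0mem : s0 ∈ Finset.univ.filter (fun s : Fin n → Bool => s i = false) := by
    simp [hs0i]
  have hinc : numInc (fstarNeg ε i) i = 2 ^ (n - 1) - 1 := by
    rw [numInc, natCard_filter', hincset, Finset.card_erase_of_mem hs0mem, filter_half']
  -- transitions of f*
  have htrans : numTrans (fstarNeg ε i) i = 2 ^ n - 1 := by
    rw [numTrans, natCard_filter']
    have : (Finset.univ.filter (fun s : Fin n → Bool => fstarNeg ε i s ≠ s i))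
        = Finset.univ.erase s0 := by
      ext s
      simp only [Finset.mem_filter, Finset.mem_erase, Finset.mem_univ, true_and, and_true]
      cases hsi : s i
      · rw [ne_eq, Bool.not_eq_false, h2 s hsi]
      · constructor
        · intro _ heq
          subst heq
          simp [hs0i] at hsi
        · intro _
          rw [h1 s hsi]
          simp
    rw [this, Finset.card_erase_of_mem (Finset.mem_univ s0), Finset.card_univ]
    congr 1
    simp
  refine ⟨hdec, hinc, htrans, ?_⟩
  intro f _ hle
  have hzero : ∀ s : Fin n → Bool, s i = true → f s = false := by
    intro s hs
    cases hf : f s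
    · rfl
    · have := hle s hf
      rw [h1 s hs] at this
      exact absurd this (by simp)
  constructor
  · rw [numDec]
    have : ∀ s : Fin n → Bool, (s i = true ∧ f s = false) ↔ s i = true := by
      intro s
      exact ⟨fun h => h.1, fun h => ⟨h, hzero s h⟩⟩
    rw [Nat.card_congr (Equiv.subtypeEquivRight this)]
    exact natCard_half' i true
  · rw [numInc, natCard_filter']
    calc (Finset.univ.filter (fun s : Fin n → Bool => s i = false ∧ f s = true)).card
        ≤ (Finset.univ.filter (fun s : Fin n → Bool => s i = false ∧ fstarNeg ε i s = true)).card := by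
          apply Finset.card_le_card
          intro s hs
          simp only [Finset.mem_filter, Finset.mem_univ, true_and] at *
          exact ⟨hs.1, hle s hs.2⟩
      _ = 2 ^ (n - 1) - 1 := by
          rw [hincset, Finset.card_erase_of_mem hs0mem, filter_half']
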